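/- Let X be an infinite-dimensional complex Banach space and T a compact bounded linear operator on X whose spectrum is an infinite set. Then T cannot be written as the direct sum of a quasinilpotent operator and a Fredholm operator: there do not exist closed subspaces M and N of X with X = M ⊕ N (a topological direct sum), T(M) ⊆ M, T(N) ⊆ N, such that the restriction T|_M is quasinilpotent and the restriction T|_N is a Fredholm operator on N. -/

import Mathlib

open Filter Topology Polynomial

variable {E : Type*} [NormedAddCommGroup E] [NormedSpace ℂ E]

/-- A (continuous linear) operator is Fredholm if its kernel is finite-dimensional and
its range has finite codimension. -/
def IsFredholm (T : E →L[ℂ] E) : Prop :=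
  FiniteDimensional ℂ (LinearMap.ker (T : E →ₗ[ℂ] E)) ∧ FiniteDimensional ℂ (E ⧸ LinearMap.range (T : E →ₗ[ℂ] E))

/-- The Fredholm (essential) spectrum. -/
def fredholmSpectrum (T : E →L[ℂ] E) : Set ℂ := {lam : ℂ | ¬ IsFredholm (T - lam • 1)}

/-- `T` is pseudo-B-Fredholm if `0` is not an accumulation point of its Fredholm spectrum. -/
def IsPseudoBFredholm (T : E →L[ℂ] E) : Prop :=
  ¬ AccPt (0 : ℂ) (Filter.principal (fredholmSpectrum T))

/-- A Riesz operator: `T - λ` is Fredholm for every `λ ≠ 0`. -/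
def IsRiesz (T : E →L[ℂ] E) : Prop := ∀ lam : ℂ, lam ≠ 0 → IsFredholm (T - lam • 1)

lemma range_pow_invariant (T : E →L[ℂ] E) (n : ℕ) :
    ∀ x ∈ LinearMap.range ((T ^ n : E →L[ℂ] E) : E →ₗ[ℂ] E), T x ∈ LinearMap.range ((T ^ n : E →L[ℂ] E) : E →ₗ[ℂ] E) := by
  rintro x ⟨y, rfl⟩
  refine ⟨T y, ?_⟩
  have h1 : (T ^ n) (T y) = (T ^ n * T) y := rfl
  have h2 : T ((T ^ n) y) = (T * T ^ n) y := rfl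
  change (T ^ n) (T y) = T ((T ^ n) y)
  rw [h1, h2, ← pow_succ, ← pow_succ']

/-- Restriction of a continuous linear operator to an invariant submodule. -/
def restrictCLM (T : E →L[ℂ] E) (M : Submodule ℂ E) (h : ∀ x ∈ M, T x ∈ M) : M →L[ℂ] M where
  toLinearMap := (T : E →ₗ[ℂ] E).restrict h
  cont := Continuous.subtype_mk (T.continuous.comp continuous_subtype_val) _

/-- `T` is B-Fredholm if for some `n` the range of `T ^ n` is closed and the operator induced
by `T` on it is Fredholm. -/
def IsBFredholm (T : E →L[ℂ] E) : Prop :=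
  ∃ n : ℕ, IsClosed ((LinearMap.range ((T ^ n : E →L[ℂ] E) : E →ₗ[ℂ] E) : Submodule ℂ E) : Set E) ∧
    IsFredholm (restrictCLM T (LinearMap.range ((T ^ n : E →L[ℂ] E) : E →ₗ[ℂ] E)) (range_pow_invariant T n))

/-- The essential ascent: the least `n` with `ker T ∩ range (T ^ n)` finite-dimensional. -/
noncomputable def essAscent (T : E →L[ℂ] E) : ℕ∞ :=
  ⨅ n ∈ {m : ℕ | FiniteDimensional ℂ ↥(LinearMap.ker (T : E →ₗ[ℂ] E) ⊓ LinearMap.range ((T ^ m : E →L[ℂ] E) : E →ₗ[ℂ] E))}, (n : ℕ∞)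

/-- The essential descent: the least `n` with `range T + ker (T ^ n)` of finite codimension. -/
noncomputable def essDescent (T : E →L[ℂ] E) : ℕ∞ :=
  ⨅ n ∈ {m : ℕ | FiniteDimensional ℂ (E ⧸ (LinearMap.range (T : E →ₗ[ℂ] E) ⊔ LinearMap.ker ((T ^ m : E →L[ℂ] E) : E →ₗ[ℂ] E)))}, (n : ℕ∞)

/-- `0` is a pole (or regular point) of order at most `m` of the resolvent of `Π(T)` in the
Calkin algebra: there is `S` with `TS - ST`, `STS - S` and `T^(m+1) S - T^m` all compact. -/
def DrazinAt (T : E →L[ℂ] E) (m : ℕ) : Prop :=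
  ∃ S : E →L[ℂ] E, IsCompactOperator ⇑(T * S - S * T) ∧ IsCompactOperator ⇑(S * T * S - S) ∧
    IsCompactOperator ⇑(T ^ (m + 1) * S - T ^ m)

/-- `Π(T)` is Drazin invertible in the Calkin algebra. -/
def CalkinDrazin (T : E →L[ℂ] E) : Prop := ∃ m : ℕ, DrazinAt T m

/-- A power compact operator. -/
def IsPowerCompact (K : E →L[ℂ] E) : Prop := ∃ m : ℕ, 1 ≤ m ∧ IsCompactOperator ⇑(K ^ m)

/-- An inessential operator: `1 - S * J` is Fredholm for every `S`. -/
def IsInessential (J : E →L[ℂ] E) : Prop := ∀ S : E →L[ℂ] E, IsFredholm (1 - S * J)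

/-- The norm of `Π(A)` in the Calkin algebra: `inf {‖A + K‖ : K compact}`. -/
noncomputable def calkinNorm (A : E →L[ℂ] E) : ℝ :=
  sInf {r : ℝ | ∃ K : E →L[ℂ] E, IsCompactOperator ⇑K ∧ r = ‖A + K‖}

/-- The ergodic means `M_n(T) = (1 + T + T² + ⋯ + Tⁿ)/n`. -/
noncomputable def meanOp (T : E →L[ℂ] E) (n : ℕ) : E →L[ℂ] E :=
  ((n : ℂ))⁻¹ • ∑ i ∈ Finset.range (n + 1), T ^ i

section AuxLemmas

variable {Y Z : Type*} [NormedAddCommGroup Y] [NormedSpace ℂ Y]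
  [NormedAddCommGroup Z] [NormedSpace ℂ Z]

lemma aux_isCompactOperator_of_finiteDimensional [FiniteDimensional ℂ Y] (f : Y →L[ℂ] Z) :
    IsCompactOperator ⇑f := by
  refine ⟨f '' Metric.closedBall 0 1, ?_, ?_⟩
  · exact ((isCompact_closedBall (0 : Y) 1).image f.continuous)
  · exact Filter.mem_of_superset (Metric.closedBall_mem_nhds 0 one_pos)
      (Set.subset_preimage_image _ _)

lemma aux_finiteDimensional_of_surjective_isCompactOperator [CompleteSpace Y] [CompleteSpace Z]
    (f : Y →L[ℂ] Z) (hc : IsCompactOperator ⇑f) (hs : Function.Surjective f) :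
    FiniteDimensional ℂ Z := by
  obtain ⟨K, hK, hKf⟩ := hc.image_closedBall_subset_compact 1
  have hopen : IsOpenMap f := f.isOpenMap hs
  have h1 : f '' Metric.ball 0 1 ∈ 𝓝 (0 : Z) :=
    (hopen _ Metric.isOpen_ball).mem_nhds ⟨0, Metric.mem_ball_self one_pos, map_zero f⟩
  obtain ⟨r, hr, hball⟩ := Metric.mem_nhds_iff.mp h1
  have hsub : Metric.closedBall (0 : Z) (r / 2) ⊆ K := by
    intro x hx
    have hx' : x ∈ Metric.ball (0 : Z) r :=
      lt_of_le_of_lt (Metric.mem_closedBall.mp hx) (by linarith)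
    rcases hball hx' with ⟨y, hy, rfl⟩
    exact hKf ⟨y, Metric.ball_subset_closedBall hy, rfl⟩
  have hcpt : IsCompact (Metric.closedBall (0 : Z) (r / 2)) :=
    hK.of_isClosed_subset Metric.isClosed_closedBall hsub
  exact FiniteDimensional.of_isCompact_closedBall₀ ℂ (by linarith) hcpt

lemma aux_finiteDimensional_of_isCompactOperator_isFredholm [CompleteSpace Y]
    (f : Y →L[ℂ] Y) (hc : IsCompactOperator ⇑f) (hf : IsFredholm f) :
    FiniteDimensional ℂ Y := by
  obtain ⟨F, hF⟩ := (LinearMap.range (f : Y →ₗ[ℂ] Y)).exists_isCompl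
  haveI : FiniteDimensional ℂ (Y ⧸ LinearMap.range (f : Y →ₗ[ℂ] Y)) := hf.2
  haveI : FiniteDimensional ℂ F :=
    ((LinearMap.range (f : Y →ₗ[ℂ] Y)).quotientEquivOfIsCompl F hF).finiteDimensional
  haveI : CompleteSpace F := FiniteDimensional.complete ℂ F
  set S : (Y × F) →L[ℂ] Y := f.coprod F.subtypeL with hS
  have hScompact : IsCompactOperator ⇑S := by
    have h1 : IsCompactOperator (⇑f ∘ ⇑(ContinuousLinearMap.fst ℂ Y F)) :=
      hc.comp_clm _
    have h2 : IsCompactOperator (⇑F.subtypeL ∘ ⇑(ContinuousLinearMap.snd ℂ Y F)) :=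
      (aux_isCompactOperator_of_finiteDimensional F.subtypeL).comp_clm _
    have h3 := h1.add h2
    have : ⇑S = (⇑f ∘ ⇑(ContinuousLinearMap.fst ℂ Y F)) +
        (⇑F.subtypeL ∘ ⇑(ContinuousLinearMap.snd ℂ Y F)) := by
      funext p; simp [hS]
    rwa [this]
  have hSsurj : Function.Surjective S := by
    intro y
    have hy : y ∈ LinearMap.range (f : Y →ₗ[ℂ] Y) ⊔ F := by rw [hF.codisjoint.eq_top]; trivial
    obtain ⟨a, ha, b, hb, rfl⟩ := Submodule.mem_sup.mp hy
    obtain ⟨x, rfl⟩ := ha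
    exact ⟨(x, ⟨b, hb⟩), by simp [hS]⟩
  exact aux_finiteDimensional_of_surjective_isCompactOperator S hScompact hSsurj

lemma aux_spectrum_finite_of_finiteDimensional (f : Y →L[ℂ] Y) [FiniteDimensional ℂ Y] :
    (spectrum ℂ f).Finite := by
  refine (Module.End.finite_spectrum (f : Y →ₗ[ℂ] Y)).subset ?_
  intro lam hlam
  by_contra hlam'
  rw [spectrum.notMem_iff] at hlam'
  have hbij : Function.Bijective (algebraMap ℂ (Module.End ℂ Y) lam - (f : Y →ₗ[ℂ] Y)) :=
    (Module.End.isUnit_iff _).mp hlam'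
  let e := (LinearEquiv.ofBijective _ hbij).toContinuousLinearEquiv
  have hco : ∀ y : Y, (algebraMap ℂ (Y →L[ℂ] Y) lam - f) y = e y := by
    intro y
    show lam • y - f y = (algebraMap ℂ (Module.End ℂ Y) lam - (f : Y →ₗ[ℂ] Y)) y
    simp [Algebra.algebraMap_eq_smul_one]
  have : IsUnit (algebraMap ℂ (Y →L[ℂ] Y) lam - f) := by
    refine ⟨⟨algebraMap ℂ (Y →L[ℂ] Y) lam - f, (e.symm : Y →L[ℂ] Y), ?_, ?_⟩, rfl⟩
    · ext x
      show (algebraMap ℂ (Y →L[ℂ] Y) lam - f) (e.symm x) = x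
      rw [hco]; exact e.apply_symm_apply x
    · ext x
      show e.symm ((algebraMap ℂ (Y →L[ℂ] Y) lam - f) x) = x
      rw [hco]; exact e.symm_apply_apply x
  exact spectrum.notMem_iff.mpr this hlam

end AuxLemmas

variable {X : Type*} [NormedAddCommGroup X] [NormedSpace ℂ X] [CompleteSpace X]

/-- A compact operator with infinite spectrum is not a direct sum of a quasinilpotent
operator and a Fredholm operator. -/
theorem compact_infinite_spectrum_not_directSum_quasinilpotent_fredholm
    (hX : ¬ FiniteDimensional ℂ X) (T : X →L[ℂ] X)
    (hT : IsCompactOperator ⇑T) (hspec : (spectrum ℂ T).Infinite) :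
    ¬ ∃ (M N : Submodule ℂ X) (_ : IsClosed (M : Set X)) (_ : IsClosed (N : Set X))
        (_ : IsCompl M N) (hM : ∀ x ∈ M, T x ∈ M) (hN : ∀ x ∈ N, T x ∈ N),
        spectrum ℂ (restrictCLM T M hM) = {0} ∧ IsFredholm (restrictCLM T N hN) := by
  rintro ⟨M, N, hMc, hNc, hcompl, hM, hN, hqM, hFN⟩
  haveI : CompleteSpace N := hNc.completeSpace_coe
  have hTN : IsCompactOperator ⇑(restrictCLM T N hN) :=
    (hT : IsCompactOperator ⇑(T : X →ₗ[ℂ] X)).restrict hN hNc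
  haveI hNfin : FiniteDimensional ℂ N :=
    aux_finiteDimensional_of_isCompactOperator_isFredholm _ hTN hFN
  set TM := restrictCLM T M hM with hTMdef
  set TN := restrictCLM T N hN with hTNdef
  -- spectrum inclusion
  have key : ∀ lam : ℂ, lam ∉ spectrum ℂ TM → lam ∉ spectrum ℂ TN →
      lam ∉ spectrum ℂ T := by
    intro lam h1 h2
    rw [spectrum.notMem_iff] at h1 h2 ⊢
    set e := M.prodEquivOfClosedCompl N hcompl hMc hNc with hedef
    obtain ⟨u, hu⟩ := h1
    obtain ⟨v, hv⟩ := h2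
    set D := algebraMap ℂ (X →L[ℂ] X) lam - T with hDdef
    have he : ∀ q : M × N, e q = (q.1 : X) + (q.2 : X) := fun q => rfl
    have hue : ∀ m : M, (((u : M →L[ℂ] M) m : M) : X) = lam • (m : X) - T m := by
      intro m
      rw [hu]
      show ((((algebraMap ℂ (M →L[ℂ] M) lam) m : M) : X) - ((TM m : M) : X)) = _
      congr 1
    have hve : ∀ n : N, (((v : N →L[ℂ] N) n : N) : X) = lam • (n : X) - T n := by
      intro n
      rw [hv]
      show ((((algebraMap ℂ (N →L[ℂ] N) lam) n : N) : X) - ((TN n : N) : X)) = _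
      congr 1
    have hkey : ∀ p : M × N, D (e p) = e ((u : M →L[ℂ] M) p.1, (v : N →L[ℂ] N) p.2) := by
      intro p
      rw [he, he]
      show lam • ((p.1 : X) + (p.2 : X)) - T ((p.1 : X) + (p.2 : X)) = _
      rw [hue, hve, map_add, smul_add]
      abel
    have huu : ∀ a : M, (u : M →L[ℂ] M) ((↑u⁻¹ : M →L[ℂ] M) a) = a := by
      intro a
      have h := u.mul_inv
      calc (u : M →L[ℂ] M) ((↑u⁻¹ : M →L[ℂ] M) a)
          = ((u : M →L[ℂ] M) * (↑u⁻¹ : M →L[ℂ] M)) a := rfl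
        _ = a := by rw [h]; rfl
    have huu' : ∀ a : M, (↑u⁻¹ : M →L[ℂ] M) ((u : M →L[ℂ] M) a) = a := by
      intro a
      have h := u.inv_mul
      calc (↑u⁻¹ : M →L[ℂ] M) ((u : M →L[ℂ] M) a)
          = ((↑u⁻¹ : M →L[ℂ] M) * (u : M →L[ℂ] M)) a := rfl
        _ = a := by rw [h]; rfl
    have hvv : ∀ a : N, (v : N →L[ℂ] N) ((↑v⁻¹ : N →L[ℂ] N) a) = a := by
      intro a
      have h := v.mul_inv
      calc (v : N →L[ℂ] N) ((↑v⁻¹ : N →L[ℂ] N) a)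
          = ((v : N →L[ℂ] N) * (↑v⁻¹ : N →L[ℂ] N)) a := rfl
        _ = a := by rw [h]; rfl
    have hvv' : ∀ a : N, (↑v⁻¹ : N →L[ℂ] N) ((v : N →L[ℂ] N) a) = a := by
      intro a
      have h := v.inv_mul
      calc (↑v⁻¹ : N →L[ℂ] N) ((v : N →L[ℂ] N) a)
          = ((↑v⁻¹ : N →L[ℂ] N) * (v : N →L[ℂ] N)) a := rfl
        _ = a := by rw [h]; rfl
    set B : X →L[ℂ] X :=
      (e : M × N →L[ℂ] X) ∘L
        ((↑u⁻¹ : M →L[ℂ] M).prodMap (↑v⁻¹ : N →L[ℂ] N)) ∘L (e.symm : X →L[ℂ] M × N)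
      with hBdef
    have hB : ∀ x : X, B x = e ((↑u⁻¹ : M →L[ℂ] M) (e.symm x).1,
        (↑v⁻¹ : N →L[ℂ] N) (e.symm x).2) := fun x => rfl
    refine ⟨⟨D, B, ?_, ?_⟩, rfl⟩
    · ext x
      show D (B x) = x
      rw [hB, hkey]
      simp only [huu, hvv]
      show e ((e.symm x).1, (e.symm x).2) = x
      rw [Prod.mk.eta]
      exact e.apply_symm_apply x
    · ext x
      show B (D x) = x
      have h := hkey (e.symm x)
      rw [e.apply_symm_apply] at h
      rw [h, hB, e.symm_apply_apply]
      show e ((↑u⁻¹ : M →L[ℂ] M) ((u : M →L[ℂ] M) (e.symm x).1),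
        (↑v⁻¹ : N →L[ℂ] N) ((v : N →L[ℂ] N) (e.symm x).2)) = x
      rw [huu', hvv']
      show e ((e.symm x).1, (e.symm x).2) = x
      rw [Prod.mk.eta]
      exact e.apply_symm_apply x
  have hsub : spectrum ℂ T ⊆ spectrum ℂ TM ∪ spectrum ℂ TN := by
    intro lam hl
    by_contra hcon
    rw [Set.mem_union, not_or] at hcon
    exact key lam hcon.1 hcon.2 hl
  have hfin : (spectrum ℂ T).Finite := by
    refine Set.Finite.subset ?_ hsub
    rw [hqM]
    exact (Set.finite_singleton 0).union (aux_spectrum_finite_of_finiteDimensional TN)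
  exact hspec hfin
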